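/- Let A : ℝ → Matrix (Fin n) (Fin n) ℝ be continuous with A(s + ω) = A(s), and define M(s) = ∑_{k≥1} ξ^{(k)}A(s) (the Peano–Baker series minus the identity). Then the system φ' = Aφ has a nonzero solution that is periodic of period ω if and only if det(M(ω)) = 0. -/

import Mathlib

open Matrix

/-- Iterated Peano–Baker integrals. -/
noncomputable def xi {n : ℕ} (A : ℝ → Matrix (Fin n) (Fin n) ℝ) :
    ℕ → ℝ → Matrix (Fin n) (Fin n) ℝ
  | 0, _ => 1
  | k + 1, s => Matrix.of fun i j => ∫ σ in (0:ℝ)..s, (A σ * xi A k σ) i j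

attribute [local instance] Matrix.normedAddCommGroup Matrix.normedSpace

namespace StmtAux

open MeasureTheory intervalIntegral Filter Topology Set
open scoped Interval

variable {n : ℕ} {A : ℝ → Matrix (Fin n) (Fin n) ℝ} {C : ℝ}

lemma entry_abs_mul_le (M N : Matrix (Fin n) (Fin n) ℝ) (i j : Fin n) :
    ‖(M * N) i j‖ ≤ n * ‖M‖ * ‖N‖ := by
  rw [Matrix.mul_apply]
  calc ‖∑ l, M i l * N l j‖ ≤ ∑ l, ‖M i l * N l j‖ := norm_sum_le _ _
    _ ≤ ∑ _l : Fin n, ‖M‖ * ‖N‖ := by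
        refine Finset.sum_le_sum fun l _ => ?_
        rw [norm_mul]
        exact mul_le_mul (Matrix.norm_entry_le_entrywise_sup_norm M)
          (Matrix.norm_entry_le_entrywise_sup_norm N) (norm_nonneg _) (norm_nonneg _)
    _ = n * ‖M‖ * ‖N‖ := by simp [mul_assoc]

lemma xi_continuous (hA : Continuous A) : ∀ k, Continuous (xi A k)
  | 0 => continuous_const
  | k + 1 => by
      apply continuous_matrix
      intro i j
      have hg : Continuous fun σ => (A σ * xi A k σ) i j :=
        ((hA.matrix_mul (xi_continuous hA k)).matrix_elem i j)
      exact intervalIntegral.continuous_primitive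
        (fun a b => hg.intervalIntegrable a b) 0

lemma xi_hasDerivAt (hA : Continuous A) (k : ℕ) (s : ℝ) :
    HasDerivAt (xi A (k + 1)) (A s * xi A k s) s := by
  refine hasDerivAt_pi.2 fun i => ?_
  refine hasDerivAt_pi.2 fun j => ?_
  have hg : Continuous fun σ => (A σ * xi A k σ) i j :=
    ((hA.matrix_mul (xi_continuous hA k)).matrix_elem i j)
  exact intervalIntegral.integral_hasDerivAt_right (hg.intervalIntegrable _ _)
    hg.stronglyMeasurable.stronglyMeasurableAtFilter hg.continuousAt

lemma xi_norm_le (hA : Continuous A) (hC : ∀ s, ‖A s‖ ≤ C) :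
    ∀ (k : ℕ) (s : ℝ), ‖xi A k s‖ ≤ (n * C) ^ k * |s| ^ k / k.factorial := by
  have hC0 : (0:ℝ) ≤ C := le_trans (norm_nonneg _) (hC 0)
  have hnC0 : (0:ℝ) ≤ n * C := by positivity
  intro k
  induction k with
  | zero =>
      intro s
      simp only [pow_zero, Nat.factorial_zero, Nat.cast_one, one_mul, div_one]
      rw [Matrix.norm_le_iff zero_le_one]
      intro i j
      rcases eq_or_ne i j with h | h <;> simp [xi, Matrix.one_apply, h]
  | succ k ih =>
      intro s
      have hr0 : (0:ℝ) ≤ (n * C) ^ (k+1) * |s| ^ (k+1) / (k+1).factorial := by positivity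
      rw [Matrix.norm_le_iff hr0]
      intro i j
      have hg : Continuous fun σ => (A σ * xi A k σ) i j :=
        ((hA.matrix_mul (xi_continuous hA k)).matrix_elem i j)
      have key : ‖xi A (k+1) s i j‖ ≤ ∫ σ in Ι 0 s, ‖(A σ * xi A k σ) i j‖ := by
        simpa [xi] using
          intervalIntegral.norm_integral_le_integral_norm_uIoc
            (f := fun σ => (A σ * xi A k σ) i j) (a := 0) (b := s) (μ := volume)
      have hbound : ∀ σ ∈ Ι (0:ℝ) s, ‖(A σ * xi A k σ) i j‖ ≤
          (n * C) ^ (k+1) / k.factorial * |σ| ^ k := by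
        intro σ _
        calc ‖(A σ * xi A k σ) i j‖ ≤ n * ‖A σ‖ * ‖xi A k σ‖ := entry_abs_mul_le _ _ i j
          _ ≤ n * C * ((n * C) ^ k * |σ| ^ k / k.factorial) := by
              apply mul_le_mul
              · exact mul_le_mul_of_nonneg_left (hC σ) (by positivity)
              · exact ih σ
              · exact norm_nonneg _
              · exact hnC0
          _ = (n * C) ^ (k+1) / k.factorial * |σ| ^ k := by ring
      have hint1 : IntegrableOn (fun σ => ‖(A σ * xi A k σ) i j‖) (Ι 0 s) volume :=
        (hg.norm.intervalIntegrable 0 s).def'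
      have hint2 : IntegrableOn (fun σ => (n * C) ^ (k+1) / k.factorial * |σ| ^ k)
          (Ι 0 s) volume := by
        apply Continuous.integrableOn_uIoc
        exact continuous_const.mul ((continuous_abs.pow k))
      have key2 : (∫ σ in Ι 0 s, ‖(A σ * xi A k σ) i j‖) ≤
          ∫ σ in Ι 0 s, (n * C) ^ (k+1) / k.factorial * |σ| ^ k :=
        setIntegral_mono_on hint1 hint2 measurableSet_uIoc hbound
      have habs : (∫ σ in Ι 0 s, |σ| ^ k) = |s| ^ (k+1) / (k+1) := by
        simpa using integral_pow_abs_sub_uIoc (a := 0) (b := s) (n := k)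
      calc ‖xi A (k+1) s i j‖ ≤ ∫ σ in Ι 0 s, (n * C) ^ (k+1) / k.factorial * |σ| ^ k :=
            key.trans key2
        _ = (n * C) ^ (k+1) / k.factorial * (|s| ^ (k+1) / (k+1)) := by
            rw [MeasureTheory.integral_const_mul, habs]
        _ = (n * C) ^ (k+1) * |s| ^ (k+1) / (k+1).factorial := by
            have h1 : ((k.factorial : ℝ)) ≠ 0 := Nat.cast_ne_zero.2 k.factorial_ne_zero
            have h2 : ((k : ℝ) + 1) ≠ 0 := by positivity
            rw [Nat.factorial_succ]
            push_cast
            field_simp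

/-- The Peano–Baker series (state transition matrix from time 0). -/
noncomputable def Phi (A : ℝ → Matrix (Fin n) (Fin n) ℝ) (s : ℝ) :
    Matrix (Fin n) (Fin n) ℝ := ∑' k : ℕ, xi A k s

lemma summable_xi (hA : Continuous A) (hC : ∀ s, ‖A s‖ ≤ C) (s : ℝ) :
    Summable fun k => xi A k s := by
  apply Summable.of_norm_bounded (Real.summable_pow_div_factorial (n * C * |s|))
  intro k
  rw [mul_pow]
  exact xi_norm_le hA hC k s

lemma summable_xi_succ (hA : Continuous A) (hC : ∀ s, ‖A s‖ ≤ C) (s : ℝ) :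
    Summable fun k => xi A (k + 1) s :=
  (_root_.summable_nat_add_iff 1).2 (summable_xi hA hC s)

lemma Phi_eq_one_add (hA : Continuous A) (hC : ∀ s, ‖A s‖ ≤ C) (s : ℝ) :
    Phi A s = 1 + ∑' k : ℕ, xi A (k + 1) s := by
  rw [Phi, (summable_xi hA hC s).tsum_eq_zero_add]
  rfl

lemma Phi_zero : Phi A 0 = 1 := by
  rw [Phi, tsum_eq_single 0]
  · rfl
  · intro k hk
    obtain ⟨m, rfl⟩ := Nat.exists_eq_succ_of_ne_zero hk
    ext i j
    simp [xi]

lemma Phi_hasDerivAt (hA : Continuous A) (hC : ∀ s, ‖A s‖ ≤ C) (s₀ : ℝ) :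
    HasDerivAt (Phi A) (A s₀ * Phi A s₀) s₀ := by
  have hC0 : (0:ℝ) ≤ C := le_trans (norm_nonneg _) (hC 0)
  have hnC0 : (0:ℝ) ≤ n * C := by positivity
  set R : ℝ := |s₀| + 1 with hR
  have hmem : s₀ ∈ Ioo (-R) R := by
    constructor
    · nlinarith [neg_abs_le s₀, abs_nonneg s₀]
    · nlinarith [le_abs_self s₀]
  have hu : Summable fun k : ℕ => n * C * ((n * C * R) ^ k / k.factorial) :=
    (Real.summable_pow_div_factorial (n * C * R)).mul_left _
  have hDU : TendstoUniformlyOn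
      (fun (N : ℕ) (x : ℝ) => ∑ k ∈ Finset.range N, A x * xi A k x)
      (fun x => ∑' k : ℕ, A x * xi A k x) atTop (Ioo (-R) R) := by
    apply tendstoUniformlyOn_tsum_nat hu
    intro k x hx
    have hxR : |x| ≤ R := by
      rcases hx with ⟨h1, h2⟩
      rw [abs_le]; constructor <;> linarith
    have hb : ‖A x * xi A k x‖ ≤ n * C * ((n * C * R) ^ k / k.factorial) := by
      have hr0 : (0:ℝ) ≤ n * C * ((n * C * R) ^ k / k.factorial) := by positivity
      rw [Matrix.norm_le_iff hr0]
      intro i j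
      calc ‖(A x * xi A k x) i j‖ ≤ n * ‖A x‖ * ‖xi A k x‖ := entry_abs_mul_le _ _ i j
        _ ≤ n * C * ((n * C) ^ k * |x| ^ k / k.factorial) := by
            apply mul_le_mul (mul_le_mul_of_nonneg_left (hC x) (by positivity))
              (xi_norm_le hA hC k x) (norm_nonneg _) hnC0
        _ ≤ n * C * ((n * C * R) ^ k / k.factorial) := by
            apply mul_le_mul_of_nonneg_left _ hnC0
            apply div_le_div_of_nonneg_right _ (by positivity)
            rw [mul_pow (↑n * C) R]
            exact mul_le_mul_of_nonneg_left
              (pow_le_pow_left₀ (abs_nonneg x) hxR k) (by positivity)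
    exact hb
  have hderiv : ∀ᶠ N in (atTop : Filter ℕ), ∀ x ∈ Ioo (-R) R,
      HasDerivAt (fun x => (1 : Matrix (Fin n) (Fin n) ℝ) +
        ∑ k ∈ Finset.range N, xi A (k+1) x)
        (∑ k ∈ Finset.range N, A x * xi A k x) x := by
    filter_upwards with N x _
    exact (HasDerivAt.fun_sum fun k _ => xi_hasDerivAt hA k x).const_add 1
  have hptwise : ∀ x ∈ Ioo (-R) R, Tendsto
      (fun N => (1 : Matrix (Fin n) (Fin n) ℝ) + ∑ k ∈ Finset.range N, xi A (k+1) x)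
      atTop (𝓝 (Phi A x)) := by
    intro x _
    rw [Phi_eq_one_add hA hC x]
    exact tendsto_const_nhds.add ((summable_xi_succ hA hC x).hasSum.tendsto_sum_nat)
  have h := hasDerivAt_of_tendstoUniformlyOn isOpen_Ioo hDU hderiv hptwise hmem
  have hmulsum : (∑' k : ℕ, A s₀ * xi A k s₀) = A s₀ * Phi A s₀ := by
    let L : Matrix (Fin n) (Fin n) ℝ →ₗ[ℝ] Matrix (Fin n) (Fin n) ℝ :=
      LinearMap.mulLeft ℝ (A s₀)
    have := ((summable_xi hA hC s₀).hasSum.mapL L.toContinuousLinearMap).tsum_eq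
    simpa [L, Phi] using this
  rwa [hmulsum] at h

lemma sol_hasDerivAt (hA : Continuous A) (hC : ∀ s, ‖A s‖ ≤ C) (v : Fin n → ℝ) (s : ℝ) :
    HasDerivAt (fun s => Phi A s *ᵥ v) (A s *ᵥ (Phi A s *ᵥ v)) s := by
  have h := Phi_hasDerivAt hA hC s
  let L : Matrix (Fin n) (Fin n) ℝ →ₗ[ℝ] (Fin n → ℝ) :=
    { toFun := fun M => M *ᵥ v
      map_add' := fun M N => Matrix.add_mulVec M N v
      map_smul' := fun c M => Matrix.smul_mulVec c M v }
  have h2 := (L.toContinuousLinearMap.hasFDerivAt).comp_hasDerivAt s h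
  have h3 : HasDerivAt (fun s => Phi A s *ᵥ v) ((A s * Phi A s) *ᵥ v) s := h2
  rwa [← Matrix.mulVec_mulVec] at h3

lemma norm_mulVec_le (M : Matrix (Fin n) (Fin n) ℝ) (x : Fin n → ℝ) :
    ‖M *ᵥ x‖ ≤ n * ‖M‖ * ‖x‖ := by
  have h0 : (0:ℝ) ≤ n * ‖M‖ * ‖x‖ := by positivity
  rw [pi_norm_le_iff_of_nonneg h0]
  intro i
  calc ‖(M *ᵥ x) i‖ = ‖∑ j, M i j * x j‖ := rfl
    _ ≤ ∑ j, ‖M i j * x j‖ := norm_sum_le _ _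
    _ ≤ ∑ _j : Fin n, ‖M‖ * ‖x‖ := by
        refine Finset.sum_le_sum fun j _ => ?_
        rw [norm_mul]
        exact mul_le_mul (Matrix.norm_entry_le_entrywise_sup_norm M)
          (norm_le_pi_norm x j) (norm_nonneg _) (norm_nonneg _)
    _ = n * ‖M‖ * ‖x‖ := by simp [mul_assoc]

lemma ode_unique (hC : ∀ s, ‖A s‖ ≤ C) {f g : ℝ → Fin n → ℝ} {t₀ : ℝ}
    (hf : ∀ s, HasDerivAt f (A s *ᵥ f s) s) (hg : ∀ s, HasDerivAt g (A s *ᵥ g s) s)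
    (h0 : f t₀ = g t₀) : f = g := by
  have hC0 : (0:ℝ) ≤ C := le_trans (norm_nonneg _) (hC 0)
  have hnC0 : (0:ℝ) ≤ n * C := by positivity
  set K : NNReal := ⟨n * C, hnC0⟩ with hK
  have hlip : ∀ t, LipschitzOnWith K (fun x => A t *ᵥ x) univ := by
    intro t
    apply LipschitzWith.lipschitzOnWith
    apply LipschitzWith.of_dist_le_mul
    intro x y
    rw [dist_eq_norm, dist_eq_norm, ← Matrix.mulVec_sub]
    calc ‖A t *ᵥ (x - y)‖ ≤ n * ‖A t‖ * ‖x - y‖ := norm_mulVec_le _ _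
      _ ≤ n * C * ‖x - y‖ := by
          apply mul_le_mul_of_nonneg_right _ (norm_nonneg _)
          exact mul_le_mul_of_nonneg_left (hC t) (by positivity)
      _ = (K : ℝ) * ‖x - y‖ := rfl
  funext t
  set b : ℝ := |t| + |t₀| + 1 with hb
  have hmemt : t ∈ Ioo (-b) b := by
    constructor
    · nlinarith [neg_abs_le t, abs_nonneg t, abs_nonneg t₀]
    · nlinarith [le_abs_self t, abs_nonneg t₀]
  have hmemt₀ : t₀ ∈ Ioo (-b) b := by
    constructor
    · nlinarith [neg_abs_le t₀, abs_nonneg t, abs_nonneg t₀]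
    · nlinarith [le_abs_self t₀, abs_nonneg t]
  exact ODE_solution_unique_of_mem_Ioo (fun t _ => hlip t) hmemt₀
    (fun s _ => ⟨hf s, mem_univ _⟩) (fun s _ => ⟨hg s, mem_univ _⟩) h0 hmemt

end StmtAux

open StmtAux Set

/-- The system `φ' = Aφ`, with `A` continuous and ω-periodic, has a nonzero ω-periodic solution
iff `det M(ω) = 0`, where `M(s) = ∑_{k≥1} ξ⁽ᵏ⁾A(s)`. -/
theorem stmt_2 {n : ℕ} (ω : ℝ) (hω : 0 < ω)
    (A : ℝ → Matrix (Fin n) (Fin n) ℝ)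
    (hAcont : Continuous fun s => A s)
    (hAper : ∀ s, A (s + ω) = A s) :
    (∃ φ : ℝ → Fin n → ℝ, (∀ s, HasDerivAt φ (A s *ᵥ φ s) s) ∧ φ ≠ 0 ∧
        ∀ s, φ (s + ω) = φ s) ↔
      (∑' k : ℕ, xi A (k + 1) ω).det = 0 := by
  classical
  obtain ⟨C, hC⟩ : ∃ C, ∀ s, ‖A s‖ ≤ C := by
    obtain ⟨C, hC⟩ := (isCompact_Icc (a := (0:ℝ)) (b := ω)).exists_bound_of_continuousOn
      hAcont.continuousOn
    refine ⟨C, fun s => ?_⟩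
    obtain ⟨y, hy, hyy⟩ := Function.Periodic.exists_mem_Ico₀ (f := A) (c := ω) hAper hω s
    rw [hyy]
    exact hC y (Ico_subset_Icc_self hy)
  have hPhiω : Phi A ω = 1 + ∑' k : ℕ, xi A (k + 1) ω := Phi_eq_one_add hAcont hC ω
  constructor
  · rintro ⟨φ, hφd, hφne, hφper⟩
    set v := φ 0 with hv
    have hvne : v ≠ 0 := by
      intro h
      apply hφne
      have hzero : ∀ s, HasDerivAt (fun _ : ℝ => (0 : Fin n → ℝ))
          (A s *ᵥ (0 : Fin n → ℝ)) s := by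
        intro s
        simpa [Matrix.mulVec_zero] using hasDerivAt_const s (0 : Fin n → ℝ)
      exact ode_unique hC hφd hzero (t₀ := 0) h
    have hφeq : φ = fun s => Phi A s *ᵥ v :=
      ode_unique hC hφd (fun s => sol_hasDerivAt hAcont hC v s) (t₀ := 0)
        (by simp [StmtAux.Phi_zero, Matrix.one_mulVec, hv])
    have hMv : (∑' k : ℕ, xi A (k + 1) ω) *ᵥ v = 0 := by
      have h1 : φ ω = v := by simpa using hφper 0
      have h2 : φ ω = Phi A ω *ᵥ v := by rw [hφeq]
      rw [hPhiω, Matrix.add_mulVec, Matrix.one_mulVec, h1] at h2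
      have := congrArg (fun w => w - v) h2
      simpa using this.symm
    exact Matrix.exists_mulVec_eq_zero_iff.1 ⟨v, hvne, hMv⟩
  · intro hdet
    obtain ⟨v, hvne, hMv⟩ := Matrix.exists_mulVec_eq_zero_iff.2 hdet
    have hφω : Phi A ω *ᵥ v = v := by
      rw [hPhiω, Matrix.add_mulVec, Matrix.one_mulVec, hMv, add_zero]
    refine ⟨fun s => Phi A s *ᵥ v, fun s => sol_hasDerivAt hAcont hC v s, ?_, ?_⟩
    · intro h
      apply hvne
      have := congrFun h 0
      simpa [StmtAux.Phi_zero, Matrix.one_mulVec] using this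
    · have hshift : ∀ s, HasDerivAt (fun s => Phi A (s + ω) *ᵥ v)
          (A s *ᵥ (Phi A (s + ω) *ᵥ v)) s := by
        intro s
        have h1 := (sol_hasDerivAt hAcont hC v (s + ω)).comp_add_const s ω
        rwa [hAper] at h1
      have heq := ode_unique hC hshift (fun s => sol_hasDerivAt hAcont hC v s) (t₀ := 0)
        (by simp only [zero_add, hφω, StmtAux.Phi_zero, Matrix.one_mulVec])
      exact fun s => congrFun heq s
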